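/- Let f₀(z) = z(1+z)/(1−z)² on the unit disk. Then z f₀'(z)/f₀(z) = (1 + 3z)/(1−z²), and at the real point ρ = (4 − 2√2)/(√2(√(17 − 4√2) + 3)) one has |(ρ f₀'(ρ)/f₀(ρ))² − 1| = 1. -/

import Mathlib

open Metric Real

theorem F2_SL_extremal
    (f₀ : ℂ → ℂ) (hf₀ : ∀ z : ℂ, f₀ z = z * (1 + z) / (1 - z) ^ 2) :
    (∀ z ∈ ball (0 : ℂ) 1, z ≠ 0 →
      z * deriv f₀ z / f₀ z = (1 + 3 * z) / (1 - z ^ 2)) ∧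
    (let ρ : ℝ := (4 - 2 * Real.sqrt 2) / (Real.sqrt 2 * (Real.sqrt (17 - 4 * Real.sqrt 2) + 3))
     ‖((ρ : ℂ) * deriv f₀ (ρ : ℂ) / f₀ (ρ : ℂ)) ^ 2 - 1‖ = 1) := by
  have hfeq : f₀ = fun z : ℂ => z * (1 + z) / (1 - z) ^ 2 := funext hf₀
  have main : ∀ z ∈ ball (0 : ℂ) 1, z ≠ 0 →
      z * deriv f₀ z / f₀ z = (1 + 3 * z) / (1 - z ^ 2) := by
    intro z hz hz0
    rw [mem_ball_zero_iff] at hz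
    have h1 : (1 : ℂ) - z ≠ 0 := by
      intro h
      have : z = 1 := by linear_combination -h
      simp [this] at hz
    have h2 : (1 : ℂ) + z ≠ 0 := by
      intro h
      have : z = -1 := by linear_combination h
      simp [this] at hz
    have hden : ((1 : ℂ) - z) ^ 2 ≠ 0 := pow_ne_zero _ h1
    have hnum : HasDerivAt (fun z : ℂ => z * (1 + z)) (1 * (1 + z) + z * (0 + 1)) z :=
      (hasDerivAt_id z).mul ((hasDerivAt_const z 1).add (hasDerivAt_id z))
    have hden' : HasDerivAt (fun z : ℂ => (1 - z) ^ 2)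
        ((2 : ℕ) * (1 - z) ^ (2 - 1) * (0 - 1)) z :=
      (((hasDerivAt_const z 1).sub (hasDerivAt_id z)).pow 2)
    have hdiv := hnum.div hden' hden
    have hD : deriv f₀ z = ((1 * (1 + z) + z * (0 + 1)) * (1 - z) ^ 2 -
        z * (1 + z) * ((2 : ℕ) * (1 - z) ^ (2 - 1) * (0 - 1))) / ((1 - z) ^ 2) ^ 2 := by
      rw [hfeq]
      exact hdiv.deriv
    have h12 : (1 : ℂ) - z ^ 2 ≠ 0 := by
      have e : (1 : ℂ) - z ^ 2 = (1 - z) * (1 + z) := by ring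
      rw [e]; exact mul_ne_zero h1 h2
    rw [hD, hf₀ z]
    field_simp
    ring
  refine ⟨main, ?_⟩
  intro ρ
  have hs : Real.sqrt 2 ^ 2 = 2 := Real.sq_sqrt (by norm_num)
  have hs1 : (1 : ℝ) < Real.sqrt 2 := by
    nlinarith [Real.sqrt_nonneg 2]
  have hs2 : Real.sqrt 2 < 1.5 := by
    nlinarith [Real.sqrt_nonneg 2]
  have hDnn : (0 : ℝ) ≤ 17 - 4 * Real.sqrt 2 := by nlinarith
  have ht : Real.sqrt (17 - 4 * Real.sqrt 2) ^ 2 = 17 - 4 * Real.sqrt 2 :=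
    Real.sq_sqrt hDnn
  have htnn : (0 : ℝ) ≤ Real.sqrt (17 - 4 * Real.sqrt 2) := Real.sqrt_nonneg _
  have ht3 : Real.sqrt (17 - 4 * Real.sqrt 2) + 3 > 0 := by linarith
  have hρpos : 0 < ρ := by
    apply div_pos (by nlinarith) (by positivity)
  have hρlt : ρ < 1 := by
    rw [div_lt_one (by positivity)]
    nlinarith
  -- key identity : 1 + 3ρ = √2 (1 - ρ²)
  have key : 1 + 3 * ρ = Real.sqrt 2 * (1 - ρ ^ 2) := by
    show 1 + 3 * ((4 - 2 * Real.sqrt 2) / (Real.sqrt 2 * (Real.sqrt (17 - 4 * Real.sqrt 2) + 3)))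
      = Real.sqrt 2 * (1 - ((4 - 2 * Real.sqrt 2) / (Real.sqrt 2 * (Real.sqrt (17 - 4 * Real.sqrt 2) + 3))) ^ 2)
    have hsne : Real.sqrt 2 ≠ 0 := by positivity
    have ht3ne : Real.sqrt (17 - 4 * Real.sqrt 2) + 3 ≠ 0 := by positivity
    have hsne2 := hsne
    set s := Real.sqrt 2 with hsdef
    set t := Real.sqrt (17 - 4 * Real.sqrt 2) with htdef
    field_simp
    linear_combination (4*s - 6*t - 26) * hs
      + (s - s^2) * ht
  have hmem : (ρ : ℂ) ∈ ball (0 : ℂ) 1 := by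
    rw [mem_ball_zero_iff]
    have : ‖(ρ : ℂ)‖ = |ρ| := by
      rw [Complex.norm_real, Real.norm_eq_abs]
    rw [this, abs_of_pos hρpos]
    exact hρlt
  have hne : (ρ : ℂ) ≠ 0 := by
    exact_mod_cast ne_of_gt hρpos
  have := main (ρ : ℂ) hmem hne
  rw [this]
  have hρ2 : (1 : ℂ) - (ρ : ℂ) ^ 2 ≠ 0 := by
    have h0 : (1 - ρ ^ 2 : ℝ) ≠ 0 := by nlinarith
    have h1 := Complex.ofReal_ne_zero.mpr h0
    push_cast at h1
    exact h1
  have keyC : (1 : ℂ) + 3 * (ρ : ℂ) = (Real.sqrt 2 : ℂ) * (1 - (ρ : ℂ) ^ 2) := by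
    exact_mod_cast congrArg (fun x : ℝ => (x : ℂ)) key
  have : ((1 + 3 * (ρ : ℂ)) / (1 - (ρ : ℂ) ^ 2)) = (Real.sqrt 2 : ℂ) := by
    rw [keyC, mul_div_assoc, div_self hρ2, mul_one]
  rw [this]
  have : ((Real.sqrt 2 : ℂ)) ^ 2 = 2 := by exact_mod_cast congrArg (fun x : ℝ => (x : ℂ)) hs
  rw [this]
  norm_num
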